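/- arXiv:2110.06070 — 3 statements merged into one kernel-verified Lean document; each statement's English description precedes it below -/
import Mathlib

section
/- Let Γ be a countable group acting on the left on a nonempty countable set X. The action of Γ on X is amenable if and only if for every ε > 0 and every finite subset G of Γ there exists a finite subset F of X such that |(g • F) \ F| < ε·|F| for every g ∈ G. -/
/-- A real-valued function is bounded. -/
def Bdd {X : Type*} (f : X → ℝ) : Prop := ∃ C : ℝ, ∀ x, |f x| ≤ C

/-- `μ` is a `Γ`-invariant mean for the action of `Γ` on `X`: an ℝ-linear functional on
the space of bounded functions `X → ℝ` lying between the infimum and the supremum, and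
invariant under the action of `Γ`. -/
def IsInvariantMean (Γ : Type*) {X : Type*} [Group Γ] [MulAction Γ X]
    (μ : (X → ℝ) → ℝ) : Prop :=
  (∀ f g : X → ℝ, Bdd f → Bdd g → μ (f + g) = μ f + μ g) ∧
  (∀ (c : ℝ) (f : X → ℝ), Bdd f → μ (c • f) = c * μ f) ∧
  (∀ f : X → ℝ, Bdd f → sInf (Set.range f) ≤ μ f ∧ μ f ≤ sSup (Set.range f)) ∧
  (∀ (g : Γ) (f : X → ℝ), Bdd f → μ (fun x => f (g • x)) = μ f)

/-- The action of `Γ` on `X` is amenable if it admits a `Γ`-invariant mean. -/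
def AmenableAction (Γ X : Type*) [Group Γ] [MulAction Γ X] : Prop :=
  ∃ μ : (X → ℝ) → ℝ, IsInvariantMean Γ μ

/-- A group is amenable if its action on itself by left multiplication is amenable. -/
def AmenableGroup (G : Type*) [Group G] : Prop := AmenableAction G G


section FolnerAux

open Finset

lemma bdd_zero {X : Type*} : Bdd (0 : X → ℝ) := ⟨0, by simp⟩

lemma bdd_add {X : Type*} {f g : X → ℝ} (hf : Bdd f) (hg : Bdd g) : Bdd (f + g) := by
  obtain ⟨C, hC⟩ := hf; obtain ⟨D, hD⟩ := hg
  exact ⟨C + D, fun x => le_trans (abs_add_le _ _) (add_le_add (hC x) (hD x))⟩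

lemma bdd_sum {X ι : Type*} (s : Finset ι) (B : ι → X → ℝ) (hB : ∀ i, Bdd (B i)) :
    Bdd (∑ i ∈ s, B i) := by
  classical
  induction s using Finset.induction_on with
  | empty => simpa using bdd_zero
  | insert _ _ h ih => rw [Finset.sum_insert h]; exact bdd_add (hB _) ih

lemma bdd_indicator {X : Type*} (A : Set X) : Bdd (A.indicator (1 : X → ℝ)) := by
  refine ⟨1, fun x => ?_⟩
  by_cases hx : x ∈ A <;> simp [Set.indicator, hx]

lemma mu_zero {X : Type*} [Nonempty X] {μ : (X → ℝ) → ℝ}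
    (hbdd : ∀ f : X → ℝ, Bdd f → sInf (Set.range f) ≤ μ f ∧ μ f ≤ sSup (Set.range f)) :
    μ 0 = 0 := by
  have h := hbdd 0 bdd_zero
  have hr : Set.range (0 : X → ℝ) = {0} := by
    ext y; simp [Pi.zero_apply, eq_comm]
  rw [hr, csInf_singleton, csSup_singleton] at h
  linarith [h.1, h.2]

lemma mu_finset_sum {X ι : Type*} [Nonempty X] {μ : (X → ℝ) → ℝ}
    (hadd : ∀ f g : X → ℝ, Bdd f → Bdd g → μ (f + g) = μ f + μ g)
    (hbdd : ∀ f : X → ℝ, Bdd f → sInf (Set.range f) ≤ μ f ∧ μ f ≤ sSup (Set.range f))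
    (s : Finset ι) (B : ι → X → ℝ) (hB : ∀ i, Bdd (B i)) :
    μ (∑ i ∈ s, B i) = ∑ i ∈ s, μ (B i) := by
  classical
  induction s using Finset.induction_on with
  | empty => simpa using mu_zero hbdd
  | insert _ _ h ih =>
    rw [Finset.sum_insert h, Finset.sum_insert h, hadd _ _ (hB _) (bdd_sum _ _ hB), ih]

/-- indicator of a disjoint finite union is the sum of the indicators -/
lemma indicator_disjoint_sum {X ι : Type*} (s : Finset ι) (B : ι → Set X)
    (hdisj : ∀ i ∈ s, ∀ j ∈ s, i ≠ j → ∀ x, x ∈ B i → x ∉ B j) :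
    (∑ i ∈ s, (B i).indicator (1 : X → ℝ)) = (⋃ i ∈ s, B i).indicator 1 := by
  classical
  funext x
  rw [Finset.sum_apply]
  by_cases hx : ∃ i ∈ s, x ∈ B i
  · obtain ⟨i₀, hi₀s, hi₀⟩ := hx
    have hmem : x ∈ ⋃ i ∈ s, B i := Set.mem_biUnion hi₀s hi₀
    rw [Set.indicator_of_mem hmem]
    rw [Finset.sum_eq_single i₀]
    · simp [Set.indicator_of_mem hi₀]
    · intro j hj hji
      have : x ∉ B j := hdisj i₀ hi₀s j hj (fun h => hji (h ▸ rfl)) x hi₀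
      simp [Set.indicator_of_notMem this]
    · intro h; exact absurd hi₀s h
  · push_neg at hx
    have hmem : x ∉ ⋃ i ∈ s, B i := by
      intro hmem
      obtain ⟨i, his, hi⟩ := Set.mem_iUnion₂.1 hmem
      exact hx i his hi
    rw [Set.indicator_of_notMem hmem]
    exact Finset.sum_eq_zero fun i hi => Set.indicator_of_notMem (hx i hi) _

/-- the set of products of `j` elements of `G` -/
def mulPow {Γ : Type*} [DecidableEq Γ] [Group Γ] (G : Finset Γ) : ℕ → Finset Γ
  | 0 => {1}
  | (j+1) => G.biUnion (fun g => (mulPow G j).image (fun s => g * s))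

lemma mean_to_folner (Γ X : Type*) [Group Γ]
    [Nonempty X] [MulAction Γ X] [DecidableEq X]
    (hA : ∃ μ : (X → ℝ) → ℝ, IsInvariantMean Γ μ) :
    ∀ ε : ℝ, 0 < ε → ∀ G : Finset Γ, ∃ F : Finset X,
      ∀ g ∈ G, ((F.image (fun x => g • x)) \ F).card < ε * F.card := by
  classical
  by_contra hcon
  push_neg at hcon
  obtain ⟨ε, hε, G, hG⟩ := hcon
  -- hG : ∀ F, ∃ g ∈ G, ε * F.card ≤ card ...
  set G' : Finset Γ := insert 1 G with hG'
  set T : Finset X → Finset X := fun F => G'.biUnion (fun g => F.image (fun x => g • x))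
    with hT
  have hTmem : ∀ (F : Finset X) (y : X), y ∈ T F ↔ ∃ g ∈ G', ∃ x ∈ F, g • x = y := by
    intro F y
    simp [hT, Finset.mem_biUnion, Finset.mem_image]
  -- expansion
  have expand : ∀ F : Finset X, (1 + ε) * F.card ≤ ((T F).card : ℝ) := by
    intro F
    obtain ⟨g, hg, hgF⟩ := hG F
    have hsub : F ∪ (F.image (fun x => g • x) \ F) ⊆ T F := by
      intro y hy
      rcases Finset.mem_union.1 hy with hy | hy
      · exact (hTmem F y).2 ⟨1, Finset.mem_insert_self _ _, y, hy, one_smul _ _⟩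
      · obtain ⟨x, hx, hxy⟩ := Finset.mem_image.1 (Finset.mem_sdiff.1 hy).1
        exact (hTmem F y).2 ⟨g, Finset.mem_insert_of_mem hg, x, hx, hxy⟩
    have hdisj : Disjoint F (F.image (fun x => g • x) \ F) := Finset.disjoint_sdiff
    have hcard : F.card + (F.image (fun x => g • x) \ F).card ≤ (T F).card := by
      rw [← Finset.card_union_of_disjoint hdisj]
      exact Finset.card_le_card hsub
    have := hgF
    have hcard' : (F.card:ℝ) + ((F.image (fun x => g • x) \ F).card : ℝ) ≤ ((T F).card : ℝ) := by
      exact_mod_cast hcard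
    have h' : (1 + ε) * (F.card:ℝ) = F.card + ε * F.card := by ring
    linarith
  have hTpos : (0:ℝ) < 1 + ε := by linarith
  have iter : ∀ (j : ℕ) (F : Finset X), (1 + ε) ^ j * F.card ≤ ((T^[j] F).card : ℝ) := by
    intro j
    induction j with
    | zero => intro F; simp
    | succ j ih =>
      intro F
      rw [Function.iterate_succ_apply']
      calc (1 + ε) ^ (j+1) * F.card = (1 + ε) * ((1 + ε) ^ j * F.card) := by ring
      _ ≤ (1 + ε) * ((T^[j] F).card : ℝ) := by
          exact mul_le_mul_of_nonneg_left (ih F) (le_of_lt hTpos)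
      _ ≤ ((T (T^[j] F)).card : ℝ) := by
          calc (1 + ε) * ((T^[j] F).card : ℝ) = (1 + ε) * ((T^[j] F).card : ℝ) := rfl
          _ ≤ (T (T^[j] F)).card := by
              have := expand (T^[j] F); linarith
  -- choose k with 2 ≤ (1+ε)^k
  obtain ⟨k, hk⟩ : ∃ k : ℕ, (2:ℝ) ≤ (1 + ε) ^ k := by
    refine ⟨⌈1/ε⌉₊, ?_⟩
    have h1 : (1:ℝ)/ε ≤ (⌈1/ε⌉₊ : ℝ) := Nat.le_ceil _
    have h2 : (1:ℝ) + (⌈1/ε⌉₊ : ℝ) * ε ≤ (1 + ε) ^ (⌈1/ε⌉₊) :=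
      one_add_mul_le_pow (by linarith) _
    have h3 : (1:ℝ) ≤ (⌈1/ε⌉₊ : ℝ) * ε := by
      have := mul_le_mul_of_nonneg_right h1 (le_of_lt hε)
      rw [div_mul_cancel₀] at this
      · linarith
      · exact ne_of_gt hε
    linarith
  set t : X → Finset X := fun x => T^[k] {x} with ht
  -- T^[j] commutes with biUnion
  have TbiUnion : ∀ {β : Type _} (s : Finset β) (u : β → Finset X),
      T (s.biUnion u) = s.biUnion (fun b => T (u b)) := by
    intro β s u
    ext y
    simp only [hTmem, Finset.mem_biUnion]
    constructor
    · rintro ⟨g, hg, x, hx, rfl⟩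
      obtain ⟨b, hb, hxb⟩ := hx
      exact ⟨b, hb, g, hg, x, hxb, rfl⟩
    · rintro ⟨b, hb, g, hg, x, hx, rfl⟩
      exact ⟨g, hg, x, ⟨b, hb, hx⟩, rfl⟩
  have hunion : ∀ (j : ℕ) (F : Finset X), T^[j] F = F.biUnion (fun x => T^[j] {x}) := by
    intro j
    induction j with
    | zero =>
      intro F; simp only [Function.iterate_zero_apply]
      exact (Finset.biUnion_singleton_eq_self).symm
    | succ j ih =>
      intro F
      rw [Function.iterate_succ_apply', ih F, TbiUnion]
      apply Finset.ext
      intro y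
      simp only [Finset.mem_biUnion]
      constructor
      · rintro ⟨x, hx, hy⟩
        exact ⟨x, hx, by rwa [Function.iterate_succ_apply']⟩
      · rintro ⟨x, hx, hy⟩
        exact ⟨x, hx, by rwa [Function.iterate_succ_apply'] at hy⟩
  -- Hall condition
  set tt : X ⊕ X → Finset X := Sum.elim t t with htt
  have hall : ∀ s : Finset (X ⊕ X), s.card ≤ (s.biUnion tt).card := by
    intro s
    set F : Finset X := s.image (Sum.elim id id) with hFs
    have hsb : s.biUnion tt = T^[k] F := by
      rw [hunion k F]
      ext y
      simp only [Finset.mem_biUnion, hFs, Finset.mem_image]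
      constructor
      · rintro ⟨w, hw, hy⟩
        refine ⟨Sum.elim id id w, ⟨w, hw, rfl⟩, ?_⟩
        cases w <;> simpa [htt, ht] using hy
      · rintro ⟨x, ⟨w, hw, rfl⟩, hy⟩
        refine ⟨w, hw, ?_⟩
        cases w <;> simpa [htt, ht] using hy
    -- s.card ≤ 2 * F.card
    have hcard1 : s.card ≤ 2 * F.card := by
      have hinj : Set.InjOn (fun w : X ⊕ X => (Sum.elim id id w, w.isLeft)) s := by
        intro w _ w' _ hww
        cases w with
        | inl x => cases w' with
          | inl x' =>
            have hx : x = x' := by simpa using congrArg Prod.fst hww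
            rw [hx]
          | inr x' => simpa using congrArg Prod.snd hww
        | inr x => cases w' with
          | inl x' => simpa using congrArg Prod.snd hww
          | inr x' =>
            have hx : x = x' := by simpa using congrArg Prod.fst hww
            rw [hx]
      have hmaps : ∀ w ∈ s, (Sum.elim id id w, w.isLeft) ∈ F ×ˢ (Finset.univ : Finset Bool) := by
        intro w hw
        exact Finset.mem_product.2 ⟨Finset.mem_image.2 ⟨w, hw, rfl⟩, Finset.mem_univ _⟩
      have := Finset.card_le_card_of_injOn _ hmaps hinj
      rwa [Finset.card_product, Finset.card_univ, Fintype.card_bool, mul_comm] at this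
    have hcard2 : 2 * F.card ≤ (T^[k] F).card := by
      have h1 := iter k F
      have h2 : (2:ℝ) * F.card ≤ (1 + ε) ^ k * F.card :=
        mul_le_mul_of_nonneg_right hk (Nat.cast_nonneg _)
      have : (2:ℝ) * F.card ≤ ((T^[k] F).card : ℝ) := le_trans h2 h1
      exact_mod_cast this
    rw [hsb]
    omega
  obtain ⟨f, hfinj, hft⟩ := (Finset.all_card_le_biUnion_card_iff_exists_injective tt).1 hall
  -- every element of T^[j] F is s • x for s ∈ mulPow G' j
  have hSmem : ∀ (j : ℕ) (F : Finset X) (y : X), y ∈ T^[j] F →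
      ∃ s ∈ mulPow G' j, ∃ x ∈ F, y = s • x := by
    intro j
    induction j with
    | zero =>
      intro F y hy
      exact ⟨1, by simp [mulPow], y, by simpa using hy, (one_smul _ _).symm⟩
    | succ j ih =>
      intro F y hy
      rw [Function.iterate_succ_apply'] at hy
      obtain ⟨g, hg, z, hz, rfl⟩ := (hTmem _ _).1 hy
      obtain ⟨s, hs, x, hx, rfl⟩ := ih F z hz
      exact ⟨g * s, Finset.mem_biUnion.2 ⟨g, hg, Finset.mem_image.2 ⟨s, hs, rfl⟩⟩,
        x, hx, (mul_smul g s x).symm⟩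
  set S : Finset Γ := mulPow G' k with hS
  have hσex : ∀ w : X ⊕ X, ∃ s ∈ S, f w = s • (Sum.elim id id w) := by
    intro w
    have hfw : f w ∈ T^[k] {Sum.elim id id w} := by
      have := hft w
      cases w <;> simpa [htt, ht] using this
    obtain ⟨s, hs, x, hx, hfx⟩ := hSmem k _ _ hfw
    rw [Finset.mem_singleton] at hx
    exact ⟨s, hs, by rw [hfx, hx]⟩
  choose σ hσS hσeq using hσex
  -- the mean
  obtain ⟨μ, hadd, hsmul, hbdd, hinv⟩ := hA
  set ind : Set X → X → ℝ := fun A => A.indicator 1 with hind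
  -- invariance for indicators of translated sets
  have hinv_ind : ∀ (g : Γ) (P : Set X), μ (ind ((fun x => g • x) '' P)) = μ (ind P) := by
    intro g P
    have key : (fun x => ind ((fun x => g • x) '' P) (g • x)) = ind P := by
      funext x
      by_cases hx : x ∈ P
      · rw [hind]
        simp only []
        rw [Set.indicator_of_mem (Set.mem_image_of_mem _ hx), Set.indicator_of_mem hx]
        rfl
      · rw [hind]
        simp only []
        rw [Set.indicator_of_notMem, Set.indicator_of_notMem hx]
        intro hmem
        obtain ⟨x', hx', hxx⟩ := hmem
        exact hx ((MulAction.injective g hxx) ▸ hx')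
    calc μ (ind ((fun x => g • x) '' P)) = μ (fun x => ind ((fun x => g • x) '' P) (g • x)) :=
          (hinv g _ (bdd_indicator _)).symm
    _ = μ (ind P) := by rw [key]
  have hμuniv : μ (ind Set.univ) = 1 := by
    have h := hbdd (ind Set.univ) (bdd_indicator _)
    have he : ind Set.univ = fun _ => (1:ℝ) := by
      funext x; simp [hind]
    rw [he] at h
    rw [Set.range_const, csInf_singleton, csSup_singleton] at h
    have : μ (ind Set.univ) = μ (fun _ => (1:ℝ)) := by rw [he]
    rw [this]; linarith [h.1, h.2]
  -- for each side j ∈ {1,2} derive μ (ind (range part)) = 1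
  have main : ∀ (em : X → X ⊕ X), (∀ x, Sum.elim id id (em x) = x) →
      μ (ind (⋃ s ∈ S, (fun x => s • x) '' {x : X | σ (em x) = s})) = 1 := by
    intro em hem
    set P : Γ → Set X := fun s => {x : X | σ (em x) = s} with hP
    -- partition of univ
    have hPdisj : ∀ i ∈ S, ∀ j ∈ S, i ≠ j → ∀ x, x ∈ P i → x ∉ P j := by
      intro i _ j _ hij x hxi hxj
      exact hij (hxi.symm.trans hxj)
    have hPunion : (⋃ s ∈ S, P s) = Set.univ := by
      ext x
      simp only [Set.mem_iUnion, Set.mem_univ, iff_true]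
      exact ⟨σ (em x), hσS (em x), rfl⟩
    have h1 : ∑ s ∈ S, μ (ind (P s)) = 1 := by
      rw [← mu_finset_sum hadd hbdd S _ (fun s => bdd_indicator _)]
      have : (∑ s ∈ S, ind (P s)) = ind (⋃ s ∈ S, P s) :=
        indicator_disjoint_sum S P hPdisj
      rw [this, hPunion, hμuniv]
    -- translated sets
    set Q : Γ → Set X := fun s => (fun x => s • x) '' P s with hQ
    have hQdisj : ∀ i ∈ S, ∀ j ∈ S, i ≠ j → ∀ y, y ∈ Q i → y ∉ Q j := by
      intro i _ j _ hij y hyi hyj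
      obtain ⟨x, hx, rfl⟩ := hyi
      obtain ⟨x', hx', hxx⟩ := hyj
      have hfi : f (em x) = i • x := by rw [hσeq (em x), hem, hx]
      have hfj : f (em x') = j • x' := by rw [hσeq (em x'), hem, hx']
      have : f (em x') = f (em x) := by rw [hfi, hfj]; exact hxx
      have hxeq : x' = x := by
        have h' := hfinj this
        have h'' := congrArg (Sum.elim id id) h'
        rwa [hem, hem] at h''
      exact hij (by rw [← hx, ← hx', hxeq])
    have h2 : ∑ s ∈ S, μ (ind (Q s)) = μ (ind (⋃ s ∈ S, Q s)) := by
      rw [← mu_finset_sum hadd hbdd S _ (fun s => bdd_indicator _)]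
      rw [indicator_disjoint_sum S Q hQdisj]
    have h3 : ∀ s ∈ S, μ (ind (Q s)) = μ (ind (P s)) := fun s _ => hinv_ind s (P s)
    rw [← h2, Finset.sum_congr rfl h3, h1]
  -- apply to both injections
  have hmain1 := main Sum.inl (fun x => rfl)
  have hmain2 := main Sum.inr (fun x => rfl)
  set A₁ : Set X := ⋃ s ∈ S, (fun x => s • x) '' {x : X | σ (Sum.inl x) = s} with hA₁
  set A₂ : Set X := ⋃ s ∈ S, (fun x => s • x) '' {x : X | σ (Sum.inr x) = s} with hA₂
  -- A₁ and A₂ are disjoint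
  have hAdisj : ∀ y, y ∈ A₁ → y ∉ A₂ := by
    intro y hy1 hy2
    rw [hA₁] at hy1; rw [hA₂] at hy2
    simp only [Set.mem_iUnion, Set.mem_image, Set.mem_setOf_eq] at hy1 hy2
    obtain ⟨s, hsS, x, hx, hyx⟩ := hy1
    obtain ⟨s', hs'S, x', hx', hyx'⟩ := hy2
    have h1 : f (Sum.inl x) = y := by
      rw [hσeq (Sum.inl x)]; simp only [Sum.elim_inl, id_eq]; rw [hx]; exact hyx
    have h2 : f (Sum.inr x') = y := by
      rw [hσeq (Sum.inr x')]; simp only [Sum.elim_inr, id_eq]; rw [hx']; exact hyx'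
    exact absurd (hfinj (h1.trans h2.symm)) (by simp)
  -- indicator addition
  have hind12 : ind A₁ + ind A₂ = ind (A₁ ∪ A₂) := by
    funext x
    by_cases h1 : x ∈ A₁
    · have h2 := hAdisj x h1
      simp [hind, Pi.add_apply, Set.indicator_of_mem h1, Set.indicator_of_notMem h2,
        Set.indicator_of_mem (Set.mem_union_left _ h1)]
    · by_cases h2 : x ∈ A₂
      · simp [hind, Pi.add_apply, Set.indicator_of_notMem h1, Set.indicator_of_mem h2,
          Set.indicator_of_mem (Set.mem_union_right _ h2)]
      · have h3 : x ∉ A₁ ∪ A₂ := fun h => h.elim h1 h2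
        simp [hind, Pi.add_apply, Set.indicator_of_notMem h1, Set.indicator_of_notMem h2,
          Set.indicator_of_notMem h3]
  have hle1 : μ (ind (A₁ ∪ A₂)) ≤ 1 := by
    have h := (hbdd _ (bdd_indicator (A₁ ∪ A₂))).2
    refine le_trans h (csSup_le (Set.range_nonempty _) ?_)
    rintro y ⟨x, rfl⟩
    by_cases hx : x ∈ A₁ ∪ A₂ <;> simp [hind, Set.indicator_apply, hx]
  have hfin := hadd (ind A₁) (ind A₂) (bdd_indicator _) (bdd_indicator _)
  rw [hind12, hmain1, hmain2] at hfin
  linarith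


open Filter Finset

lemma sum_diff_bound {X : Type*} [DecidableEq X] (A B : Finset X) (f : X → ℝ) (C : ℝ)
    (hC : ∀ x, |f x| ≤ C) (hcard : A.card = B.card) :
    |∑ x ∈ A, f x - ∑ x ∈ B, f x| ≤ 2 * C * (A \ B).card := by
  have e1 : ∑ x ∈ A ∩ B, f x + ∑ x ∈ A \ B, f x = ∑ x ∈ A, f x :=
    Finset.sum_inter_add_sum_sdiff A B f
  have e2 : ∑ x ∈ B ∩ A, f x + ∑ x ∈ B \ A, f x = ∑ x ∈ B, f x :=
    Finset.sum_inter_add_sum_sdiff B A f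
  rw [Finset.inter_comm] at e2
  have key : ∑ x ∈ A, f x - ∑ x ∈ B, f x = ∑ x ∈ A \ B, f x - ∑ x ∈ B \ A, f x := by
    linarith
  have hb : ∀ (s : Finset X), |∑ x ∈ s, f x| ≤ C * s.card := by
    intro s
    calc |∑ x ∈ s, f x| ≤ ∑ x ∈ s, |f x| := Finset.abs_sum_le_sum_abs _ _
    _ ≤ s.card • C := Finset.sum_le_card_nsmul s _ C (fun x _ => hC x)
    _ = C * s.card := by rw [nsmul_eq_mul]; ring
  have hc : ((B \ A).card : ℝ) = (A \ B).card := by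
    rw [Finset.card_sdiff_comm hcard.symm]
  calc |∑ x ∈ A, f x - ∑ x ∈ B, f x| ≤ |∑ x ∈ A \ B, f x| + |∑ x ∈ B \ A, f x| := by
        rw [key]; exact abs_sub _ _
  _ ≤ C * (A \ B).card + C * (B \ A).card := add_le_add (hb _) (hb _)
  _ = 2 * C * (A \ B).card := by rw [hc]; ring

lemma folner_to_mean (Γ X : Type*) [Group Γ] [Countable Γ]
    [Countable X] [Nonempty X] [MulAction Γ X] [DecidableEq X]
    (h : ∀ ε : ℝ, 0 < ε → ∀ G : Finset Γ, ∃ F : Finset X,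
        ∀ g ∈ G, ((F.image (fun x => g • x)) \ F).card < ε * F.card) :
    ∃ μ : (X → ℝ) → ℝ, IsInvariantMean Γ μ := by
  classical
  obtain ⟨e, he⟩ := exists_surjective_nat Γ
  have hpos : ∀ n : ℕ, (0:ℝ) < 1 / (n + 1) := by intro n; positivity
  have hex : ∀ n : ℕ, ∃ F : Finset X, ∀ g ∈ insert (1:Γ) ((Finset.range (n+1)).image e),
      (((F.image (fun x => g • x)) \ F).card : ℝ) < 1/(n+1) * F.card :=
    fun n => h (1/(n+1)) (hpos n) _
  choose F hF using hex
  have hFpos : ∀ n, (0:ℝ) < (F n).card := by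
    intro n
    have h1 := hF n 1 (Finset.mem_insert_self _ _)

    have h0 : (0:ℝ) ≤ (((F n).image (fun x => (1:Γ) • x)) \ F n).card := Nat.cast_nonneg _
    nlinarith [hpos n]
  set a : ℕ → (X → ℝ) → ℝ := fun n f => (∑ x ∈ F n, f x) / (F n).card with hadef
  -- basic bound for averages
  have ha_mem : ∀ (f : X → ℝ) (C : ℝ), (∀ x, |f x| ≤ C) → ∀ n, a n f ∈ Set.Icc (-C) C := by
    intro f C hC n
    have habs : |a n f| ≤ C := by
      rw [hadef]
      rw [abs_div, abs_of_nonneg (le_of_lt (hFpos n)), div_le_iff₀ (hFpos n)]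
      calc |∑ x ∈ F n, f x| ≤ ∑ x ∈ F n, |f x| := Finset.abs_sum_le_sum_abs _ _
      _ ≤ (F n).card • C := Finset.sum_le_card_nsmul _ _ C (fun x _ => hC x)
      _ = C * (F n).card := by rw [nsmul_eq_mul]; ring
    exact ⟨neg_le_of_abs_le habs, le_of_abs_le habs⟩
  set U : Ultrafilter ℕ := Ultrafilter.of Filter.atTop with hUdef
  have hUle : (U : Filter ℕ) ≤ Filter.atTop := Ultrafilter.of_le _
  set μ : (X → ℝ) → ℝ := fun f => limUnder (U : Filter ℕ) (fun n => a n f) with hμdef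
  have hμ : ∀ f : X → ℝ, μ f = limUnder (U : Filter ℕ) (fun n => a n f) := fun f => rfl
  have hlim : ∀ f : X → ℝ, Bdd f → Filter.Tendsto (fun n => a n f) (U : Filter ℕ) (nhds (μ f)) := by
    intro f ⟨C, hC⟩
    have hle : (U.map (fun n => a n f) : Filter ℝ) ≤ Filter.principal (Set.Icc (-C) C) := by
      rw [Ultrafilter.coe_map, Filter.le_principal_iff, Filter.mem_map]
      exact Filter.univ_mem' (fun n => ha_mem f C hC n)
    obtain ⟨L, _, hL⟩ := isCompact_Icc.ultrafilter_le_nhds (U.map (fun n => a n f)) hle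
    rw [Ultrafilter.coe_map] at hL
    have hT : Filter.Tendsto (fun n => a n f) (U : Filter ℕ) (nhds L) := hL
    rw [hμ f, hT.limUnder_eq]
    exact hT
  refine ⟨μ, ?_, ?_, ?_, ?_⟩
  · -- additivity
    intro f g hf hg
    have heq : (fun n => a n (f + g)) = fun n => a n f + a n g := by
      funext n; rw [hadef]; simp only [Pi.add_apply, Finset.sum_add_distrib, add_div]
    have : Filter.Tendsto (fun n => a n (f + g)) (U : Filter ℕ) (nhds (μ f + μ g)) := by
      rw [heq]; exact (hlim f hf).add (hlim g hg)
    rw [hμ (f + g)]; exact this.limUnder_eq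
  · -- smul
    intro c f hf
    have heq : (fun n => a n (c • f)) = fun n => c * a n f := by
      funext n; rw [hadef]; simp only [Pi.smul_apply, smul_eq_mul, ← Finset.mul_sum, mul_div_assoc]
    have : Filter.Tendsto (fun n => a n (c • f)) (U : Filter ℕ) (nhds (c * μ f)) := by
      rw [heq]; exact (hlim f hf).const_mul c
    rw [hμ (c • f)]; exact this.limUnder_eq
  · -- bounds
    intro f hf
    obtain ⟨C, hC⟩ := hf
    have hbdd_below : BddBelow (Set.range f) := ⟨-C, fun y ⟨x, hx⟩ => hx ▸ neg_le_of_abs_le (hC x)⟩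
    have hbdd_above : BddAbove (Set.range f) := ⟨C, fun y ⟨x, hx⟩ => hx ▸ le_of_abs_le (hC x)⟩
    constructor
    · refine ge_of_tendsto (hlim f ⟨C, hC⟩) (Filter.Eventually.of_forall ?_)
      intro n
      rw [hadef, le_div_iff₀ (hFpos n)]
      calc sInf (Set.range f) * (F n).card = (F n).card • sInf (Set.range f) := by
            rw [nsmul_eq_mul]; ring
      _ ≤ ∑ x ∈ F n, f x := Finset.card_nsmul_le_sum _ _ _
            (fun x _ => csInf_le hbdd_below (Set.mem_range_self x))
    · refine le_of_tendsto (hlim f ⟨C, hC⟩) (Filter.Eventually.of_forall ?_)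
      intro n
      rw [hadef, div_le_iff₀ (hFpos n)]
      calc ∑ x ∈ F n, f x ≤ (F n).card • sSup (Set.range f) := Finset.sum_le_card_nsmul _ _ _
            (fun x _ => le_csSup hbdd_above (Set.mem_range_self x))
      _ = sSup (Set.range f) * (F n).card := by rw [nsmul_eq_mul]; ring
  · -- invariance
    intro g f hf
    obtain ⟨C, hC⟩ := hf
    have hC0 : 0 ≤ C := le_trans (abs_nonneg _) (hC (Classical.arbitrary X))
    obtain ⟨N, hN⟩ := he g
    have hev : ∀ n ≥ N, |a n (fun x => f (g • x)) - a n f| ≤ 2 * C * (1 / (n + 1)) := by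
      intro n hn
      have hgmem : g ∈ insert (1:Γ) ((Finset.range (n+1)).image e) :=
        Finset.mem_insert_of_mem (Finset.mem_image.2 ⟨N,
          Finset.mem_range.2 (Nat.lt_succ_of_le hn), hN⟩)
      set A := (F n).image (fun x => g • x) with hA
      have hinj : Function.Injective (fun x : X => g • x) := MulAction.injective g
      have hsum : ∑ y ∈ A, f y = ∑ x ∈ F n, f (g • x) :=
        Finset.sum_image (fun x _ y _ hxy => hinj hxy)
      have hcard : A.card = (F n).card := Finset.card_image_of_injective _ hinj
      have hsd := hF n g hgmem
      have hbd : |∑ y ∈ A, f y - ∑ x ∈ F n, f x| ≤ 2 * C * ((A \ F n).card) :=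
        sum_diff_bound A (F n) f C hC hcard
      have h2 : |∑ y ∈ A, f y - ∑ x ∈ F n, f x| ≤ 2 * C * (1/(n+1) * (F n).card) := by
        refine le_trans hbd (mul_le_mul_of_nonneg_left hsd.le (by positivity))
      have : a n (fun x => f (g • x)) - a n f
          = (∑ y ∈ A, f y - ∑ x ∈ F n, f x) / (F n).card := by
        rw [hadef, hsum, sub_div]
      rw [this, abs_div, abs_of_nonneg (le_of_lt (hFpos n)), div_le_iff₀ (hFpos n)]
      calc |∑ y ∈ A, f y - ∑ x ∈ F n, f x| ≤ 2 * C * (1/(n+1) * (F n).card) := h2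
      _ = 2 * C * (1 / (↑n + 1)) * (F n).card := by ring
    have hz : Filter.Tendsto (fun n => a n (fun x => f (g • x)) - a n f)
        Filter.atTop (nhds 0) := by
      refine squeeze_zero_norm' (a := fun n : ℕ => 2 * C * (1 / ((n:ℝ) + 1)))
        (Filter.eventually_atTop.2 ⟨N, fun n hn => by
          simpa [Real.norm_eq_abs] using hev n hn⟩) ?_
      have := tendsto_one_div_add_atTop_nhds_zero_nat.const_mul (2 * C)
      simpa using this
    have hz' : Filter.Tendsto (fun n => a n (fun x => f (g • x)) - a n f)
        (U : Filter ℕ) (nhds 0) := hz.mono_left hUle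
    have hT : Filter.Tendsto (fun n => a n (fun x => f (g • x))) (U : Filter ℕ)
        (nhds (μ f)) := by
      have := hz'.add (hlim f ⟨C, hC⟩)
      simpa using this
    rw [hμ (fun x => f (g • x))]; exact hT.limUnder_eq


end FolnerAux

/-- Følner's criterion: the action of a countable group `Γ` on a nonempty countable set `X`
is amenable iff for every `ε > 0` and every finite `G ⊆ Γ` there is a finite `F ⊆ X` with
`|(g • F) \ F| < ε • |F|` for all `g ∈ G`. -/
theorem amenableAction_iff_folner (Γ X : Type*) [Group Γ] [Countable Γ]
    [Countable X] [Nonempty X] [MulAction Γ X] [DecidableEq X] :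
    AmenableAction Γ X ↔
      ∀ ε : ℝ, 0 < ε → ∀ G : Finset Γ, ∃ F : Finset X,
        ∀ g ∈ G, ((F.image (fun x => g • x)) \ F).card < ε * F.card := by
  constructor
  · exact fun hA => mean_to_folner Γ X hA
  · exact fun h => folner_to_mean Γ X h
end

section
/- Let Γ be a group acting on the left on a nonempty set X with only finitely many orbits. Then the action of Γ on X is amenable if and only if there exists an orbit O of the action such that the action of Γ on O is amenable. -/
section aux

variable {X : Type*}

lemma Bdd.add {f g : X → ℝ} (hf : Bdd f) (hg : Bdd g) : Bdd (f + g) := by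
  obtain ⟨C, hC⟩ := hf; obtain ⟨D, hD⟩ := hg
  exact ⟨C + D, fun x => (abs_add_le _ _).trans (add_le_add (hC x) (hD x))⟩

lemma Bdd.neg {f : X → ℝ} (hf : Bdd f) : Bdd (-f) := by
  obtain ⟨C, hC⟩ := hf
  exact ⟨C, fun x => by simpa using hC x⟩

lemma Bdd.sub {f g : X → ℝ} (hf : Bdd f) (hg : Bdd g) : Bdd (f - g) := by
  simpa [sub_eq_add_neg] using hf.add hg.neg

lemma Bdd.const (c : ℝ) : Bdd (fun _ : X => c) := ⟨|c|, fun _ => le_rfl⟩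

lemma Bdd.smul (c : ℝ) {f : X → ℝ} (hf : Bdd f) : Bdd (c • f) := by
  obtain ⟨C, hC⟩ := hf
  exact ⟨|c| * C, fun x => by
    simp only [Pi.smul_apply, smul_eq_mul, abs_mul]
    exact mul_le_mul_of_nonneg_left (hC x) (abs_nonneg c)⟩

lemma Bdd.bddAbove {f : X → ℝ} (hf : Bdd f) : BddAbove (Set.range f) := by
  obtain ⟨C, hC⟩ := hf
  exact ⟨C, by rintro _ ⟨x, rfl⟩; exact (abs_le.1 (hC x)).2⟩

lemma Bdd.bddBelow {f : X → ℝ} (hf : Bdd f) : BddBelow (Set.range f) := by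
  obtain ⟨C, hC⟩ := hf
  exact ⟨-C, by rintro _ ⟨x, rfl⟩; exact (abs_le.1 (hC x)).1⟩

lemma Bdd.sum {ι : Type*} (s : Finset ι) (F : ι → X → ℝ) (hF : ∀ i, Bdd (F i)) :
    Bdd (∑ i ∈ s, F i) := by
  classical
  induction s using Finset.induction with
  | empty => exact Bdd.const 0
  | insert _ _ h ih => rw [Finset.sum_insert h]; exact (hF _).add ih

end aux

section mean

variable {Γ X : Type*} [Group Γ] [MulAction Γ X] {μ : (X → ℝ) → ℝ}
  (hμ : IsInvariantMean Γ μ)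

include hμ

lemma mean_zero : μ 0 = 0 := by
  have := hμ.1 0 0 (Bdd.const 0) (Bdd.const 0)
  simpa using this

lemma mean_sum {ι : Type*} (s : Finset ι) (F : ι → X → ℝ) (hF : ∀ i, Bdd (F i)) :
    μ (∑ i ∈ s, F i) = ∑ i ∈ s, μ (F i) := by
  classical
  induction s using Finset.induction with
  | empty => simpa using mean_zero hμ
  | insert _ _ h ih =>
    rw [Finset.sum_insert h, Finset.sum_insert h, hμ.1 _ _ (hF _) (Bdd.sum _ _ hF), ih]

lemma mean_sub {f g : X → ℝ} (hf : Bdd f) (hg : Bdd g) : μ (f - g) = μ f - μ g := by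
  have h : μ ((f - g) + g) = μ (f - g) + μ g := hμ.1 _ _ (hf.sub hg) hg
  rw [sub_add_cancel] at h
  linarith

lemma mean_nonneg [Nonempty X] {f : X → ℝ} (hf : Bdd f) (h0 : ∀ x, 0 ≤ f x) : 0 ≤ μ f := by
  refine le_trans ?_ ((hμ.2.2.1 f hf).1)
  exact le_csInf (Set.range_nonempty f) (by rintro _ ⟨x, rfl⟩; exact h0 x)

lemma mean_const [Nonempty X] (c : ℝ) : μ (fun _ => c) = c := by
  have h := hμ.2.2.1 (fun _ => c) (Bdd.const c)
  rw [Set.range_const] at h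
  simp only [csInf_singleton, csSup_singleton] at h
  exact le_antisymm h.2 h.1

end mean

open MulAction in
/-- If a group `Γ` acts on a nonempty set `X` with finitely many orbits, then the action of
`Γ` on `X` is amenable iff the action of `Γ` on some orbit is amenable. -/
theorem amenableAction_iff_exists_orbit (Γ X : Type*) [Group Γ] [MulAction Γ X]
    [Nonempty X] [Finite (MulAction.orbitRel.Quotient Γ X)] :
    AmenableAction Γ X ↔ ∃ x : X, AmenableAction Γ (MulAction.orbit Γ x) := by
  classical
  constructor
  · rintro ⟨μ, hμ⟩
    haveI : Fintype (orbitRel.Quotient Γ X) := Fintype.ofFinite _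
    -- indicator functions of orbits
    set I : orbitRel.Quotient Γ X → X → ℝ :=
      fun q y => if y ∈ q.orbit then 1 else 0 with hI
    have hIbdd : ∀ q, Bdd (I q) := by
      intro q
      refine ⟨1, fun y => ?_⟩
      simp only [hI]
      split <;> simp
    have hsum : (∑ q, I q) = fun _ => 1 := by
      funext y
      simp only [Finset.sum_apply, hI, orbitRel.Quotient.mem_orbit]
      rw [Finset.sum_ite_eq]
      simp
    have h1 : (∑ q, μ (I q)) = 1 := by
      rw [← mean_sum hμ _ _ hIbdd, hsum, mean_const hμ]
    have hexists : ∃ q, 0 < μ (I q) := by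
      by_contra h
      push_neg at h
      have : (∑ q, μ (I q)) ≤ 0 := Finset.sum_nonpos fun q _ => h q
      linarith
    obtain ⟨q, hq⟩ := hexists
    obtain ⟨x, rfl⟩ := q.exists_rep
    refine ⟨x, ?_⟩
    set O : Set X := orbit Γ x with hO
    have hOq : orbitRel.Quotient.orbit (⟦x⟧ : orbitRel.Quotient Γ X) = O := rfl
    have hxO : x ∈ O := mem_orbit_self x
    haveI : Nonempty O := ⟨⟨x, hxO⟩⟩
    set Ind : X → ℝ := I ⟦x⟧ with hInd
    have hIndval : ∀ y, Ind y = if y ∈ O then 1 else 0 := fun y => rfl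
    set c : ℝ := μ Ind with hc
    have hcpos : 0 < c := hq
    -- extension by zero
    set E : (O → ℝ) → X → ℝ :=
      fun f y => if h : y ∈ O then f ⟨y, h⟩ else 0 with hE
    have hEbdd : ∀ {f : O → ℝ}, Bdd f → Bdd (E f) := by
      rintro f ⟨C, hC⟩
      refine ⟨max C 0, fun y => ?_⟩
      simp only [hE]
      split
      · exact (hC _).trans (le_max_left _ _)
      · simpa using le_max_right C 0
    have hEadd : ∀ f g : O → ℝ, E (f + g) = E f + E g := by
      intro f g
      funext y
      simp only [hE, Pi.add_apply]
      split <;> simp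
    have hEsmul : ∀ (a : ℝ) (f : O → ℝ), E (a • f) = a • E f := by
      intro a f
      funext y
      simp only [hE, Pi.smul_apply, smul_eq_mul]
      split <;> simp
    -- smul of indicator
    have hsmulInd : ∀ a : ℝ, μ (fun y => a * Ind y) = a * c := by
      intro a
      have : (fun y => a * Ind y) = a • Ind := by funext y; simp
      rw [this, hμ.2.1 a Ind (hIbdd _)]
    refine ⟨fun f => μ (E f) / c, ?_, ?_, ?_, ?_⟩
    · intro f g hf hg
      show μ (E (f + g)) / c = μ (E f) / c + μ (E g) / c
      rw [hEadd, hμ.1 _ _ (hEbdd hf) (hEbdd hg), add_div]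
    · intro a f hf
      show μ (E (a • f)) / c = a * (μ (E f) / c)
      rw [hEsmul, hμ.2.1 a _ (hEbdd hf), mul_div_assoc]
    · intro f hf
      have hne : (Set.range f).Nonempty := Set.range_nonempty f
      have hbnd : ∀ a : ℝ, Bdd (fun y => a * Ind y) := by
        intro a
        refine ⟨|a|, fun y => ?_⟩
        show |a * Ind y| ≤ |a|
        rw [hIndval y]
        split <;> simp
      show sInf (Set.range f) ≤ μ (E f) / c ∧ μ (E f) / c ≤ sSup (Set.range f)
      constructor
      · -- lower bound
        set T := sInf (Set.range f) with hT
        have key : 0 ≤ μ (E f - fun y => T * Ind y) := by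
          refine mean_nonneg hμ ((hEbdd hf).sub (hbnd T)) ?_
          intro y
          simp only [Pi.sub_apply, hE, hIndval]
          split
          · next h =>
            simp only [if_pos h, mul_one, sub_nonneg]
            exact csInf_le hf.bddBelow ⟨_, rfl⟩
          · next h => simp [if_neg h]
        rw [mean_sub hμ (hEbdd hf) (hbnd T), hsmulInd] at key
        rw [le_div_iff₀ hcpos]
        linarith
      · set S := sSup (Set.range f) with hS
        have key : 0 ≤ μ ((fun y => S * Ind y) - E f) := by
          refine mean_nonneg hμ (Bdd.sub (hbnd S) (hEbdd hf)) ?_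
          intro y
          simp only [Pi.sub_apply, hE, hIndval]
          split
          · next h =>
            simp only [if_pos h, mul_one, sub_nonneg]
            exact le_csSup hf.bddAbove ⟨_, rfl⟩
          · next h => simp [if_neg h]
        rw [mean_sub hμ (hbnd S) (hEbdd hf), hsmulInd] at key
        rw [div_le_iff₀ hcpos]
        linarith
    · intro g f hf
      have hEg : E (fun o => f (g • o)) = fun y => E f (g • y) := by
        funext y
        by_cases h : y ∈ O
        · have h2 : g • y ∈ O := by
            obtain ⟨a, rfl⟩ := h
            rw [smul_smul]
            exact mem_orbit x (g * a)
          simp only [hE, dif_pos h, dif_pos h2]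
          exact congrArg f (Subtype.ext rfl)
        · have h2 : g • y ∉ O := by
            intro hgy
            apply h
            obtain ⟨a, ha⟩ := hgy
            have ha' : a • x = g • y := ha
            refine ⟨g⁻¹ * a, ?_⟩
            show (g⁻¹ * a) • x = y
            rw [mul_smul, ha', inv_smul_smul]
          simp only [hE, dif_neg h, dif_neg h2]
      show μ (E fun o => f (g • o)) / c = μ (E f) / c
      rw [hEg, hμ.2.2.2 g (E f) (hEbdd hf)]
  · rintro ⟨x, μ, hμ⟩
    haveI : Nonempty (orbit Γ x) := ⟨⟨x, mem_orbit_self x⟩⟩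
    refine ⟨fun f => μ (fun o => f o), ?_, ?_, ?_, ?_⟩
    · intro f g hf hg
      obtain ⟨C, hC⟩ := hf; obtain ⟨D, hD⟩ := hg
      exact hμ.1 _ _ ⟨C, fun o => hC o⟩ ⟨D, fun o => hD o⟩
    · intro a f hf
      obtain ⟨C, hC⟩ := hf
      exact hμ.2.1 a _ ⟨C, fun o => hC o⟩
    · intro f hf
      obtain ⟨C, hC⟩ := id hf
      have hb : Bdd (fun o : orbit Γ x => f o) := ⟨C, fun o => hC o⟩
      have h := hμ.2.2.1 _ hb
      have hsub : Set.range (fun o : orbit Γ x => f o) ⊆ Set.range f := by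
        rintro _ ⟨o, rfl⟩; exact ⟨o, rfl⟩
      constructor
      · refine le_trans (csInf_le_csInf hf.bddBelow (Set.range_nonempty _) hsub) h.1
      · refine le_trans h.2 (csSup_le_csSup hf.bddAbove (Set.range_nonempty _) hsub)
    · intro g f hf
      obtain ⟨C, hC⟩ := hf
      have := hμ.2.2.2 g (fun o : orbit Γ x => f o) ⟨C, fun o => hC o⟩
      simpa [MulAction.orbit.coe_smul] using this
end

section
/- Let π be a group, H a normal subgroup of π, and K a subgroup of H. Then the action of π by left multiplication on the coset space π/K is amenable if and only if the quotient group π/H is an amenable group and the action of H by left multiplication on π/K is amenable. -/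
lemma bdd_shift {Γ X : Type*} [Group Γ] [MulAction Γ X] (g : Γ) {f : X → ℝ}
    (hf : Bdd f) : Bdd (fun x => f (g • x)) := by
  obtain ⟨C, hC⟩ := hf; exact ⟨C, fun x => hC _⟩

lemma range_smul_eq {Γ X : Type*} [Group Γ] [MulAction Γ X] (g : Γ) (f : X → ℝ) :
    Set.range (fun x => f (g • x)) = Set.range f := by
  have h : (fun x : X => f (g • x)) = f ∘ (fun x => g • x) := rfl
  rw [h, Set.range_comp, Set.range_eq_univ.mpr (MulAction.surjective g), Set.image_univ]

lemma mean_abs_le {X : Type*} [Nonempty X] (μ : (X → ℝ) → ℝ)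
    (hb : ∀ f : X → ℝ, Bdd f → sInf (Set.range f) ≤ μ f ∧ μ f ≤ sSup (Set.range f))
    (f : X → ℝ) (C : ℝ) (hC : ∀ x, |f x| ≤ C) : |μ f| ≤ C := by
  obtain ⟨h1, h2⟩ := hb f ⟨C, hC⟩
  have hne : (Set.range f).Nonempty := Set.range_nonempty f
  have hub : ∀ y ∈ Set.range f, y ≤ C := by rintro y ⟨x, rfl⟩; exact (abs_le.mp (hC x)).2
  have hlb : ∀ y ∈ Set.range f, -C ≤ y := by rintro y ⟨x, rfl⟩; exact (abs_le.mp (hC x)).1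
  exact abs_le.mpr ⟨le_trans (le_csInf hne hlb) h1, h2.trans (csSup_le hne hub)⟩

/-- For `K ≤ H ≤ π` with `H` normal in `π`, the action of `π` on `π ⧸ K` is amenable iff
the quotient group `π ⧸ H` is amenable and the action of `H` on `π ⧸ K` is amenable. -/
theorem amenableAction_iff_quotient_amenable_and (π : Type*) [Group π]
    (K H : Subgroup π) (hKH : K ≤ H) [H.Normal] :
    AmenableAction π (π ⧸ K) ↔ AmenableGroup (π ⧸ H) ∧ AmenableAction H (π ⧸ K) := by
  haveI : Nonempty (π ⧸ K) := ⟨QuotientGroup.mk 1⟩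
  haveI : Nonempty (π ⧸ H) := ⟨QuotientGroup.mk 1⟩
  constructor
  · rintro ⟨μ, μadd, μsmul, μbnd, μinv⟩
    constructor
    · -- π ⧸ H is an amenable group
      -- natural projection p : π ⧸ K → π ⧸ H
      set p : π ⧸ K → π ⧸ H := fun x =>
        Quotient.liftOn' x (fun g => (QuotientGroup.mk g : π ⧸ H)) (by
          intro a b hab
          exact QuotientGroup.eq.mpr (hKH (QuotientGroup.leftRel_apply.mp hab))) with hp
      have pmk : ∀ g : π, p (QuotientGroup.mk g) = QuotientGroup.mk g := fun g => rfl
      have psurj : Function.Surjective p := by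
        intro q
        induction q using QuotientGroup.induction_on with
        | H g => exact ⟨QuotientGroup.mk g, rfl⟩
      have prange : ∀ f : π ⧸ H → ℝ, Set.range (f ∘ p) = Set.range f := by
        intro f
        rw [Set.range_comp, Set.range_eq_univ.mpr psurj, Set.image_univ]
      have pbdd : ∀ f : π ⧸ H → ℝ, Bdd f → Bdd (f ∘ p) := by
        rintro f ⟨C, hC⟩; exact ⟨C, fun x => hC _⟩
      refine ⟨fun f => μ (f ∘ p), ?_, ?_, ?_, ?_⟩
      · intro f g hf hg
        show μ ((f + g) ∘ p) = μ (f ∘ p) + μ (g ∘ p)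
        have h : (f + g) ∘ p = f ∘ p + g ∘ p := rfl
        rw [h, μadd _ _ (pbdd f hf) (pbdd g hg)]
      · intro c f hf
        show μ ((c • f) ∘ p) = c * μ (f ∘ p)
        have h : (c • f) ∘ p = c • (f ∘ p) := rfl
        rw [h, μsmul c _ (pbdd f hf)]
      · intro f hf
        have := μbnd (f ∘ p) (pbdd f hf)
        rwa [prange f] at this
      · intro q f hf
        obtain ⟨a, rfl⟩ := QuotientGroup.mk_surjective q
        have key : (fun x => f ((QuotientGroup.mk a : π ⧸ H) • x)) ∘ p
            = fun y => (f ∘ p) (a • y) := by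
          funext y
          induction y using QuotientGroup.induction_on with
          | H g => rfl
        show μ ((fun x => f ((QuotientGroup.mk a : π ⧸ H) • x)) ∘ p) = μ (f ∘ p)
        rw [key, μinv a (f ∘ p) (pbdd f hf)]
    · -- H acts amenably on π ⧸ K
      exact ⟨μ, μadd, μsmul, μbnd, fun h f hf => μinv (h : π) f hf⟩
  · rintro ⟨⟨m, madd, msmul, mbnd, minv⟩, ⟨ν, νadd, νsmul, νbnd, νinv⟩⟩
    -- Fb f : π ⧸ H → ℝ
    set Fb : (π ⧸ K → ℝ) → (π ⧸ H → ℝ) :=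
      fun f q => ν (fun x => f (q.out • x)) with hFb
    -- constancy of g ↦ ν (f (g • ·)) on H-cosets
    have const : ∀ (f : π ⧸ K → ℝ), Bdd f → ∀ a b : π,
        (QuotientGroup.mk a : π ⧸ H) = QuotientGroup.mk b →
        ν (fun x => f (a • x)) = ν (fun x => f (b • x)) := by
      intro f hf a b hab
      have hm : a⁻¹ * b ∈ H := QuotientGroup.eq.mp hab
      have hb : b = a * (a⁻¹ * b) := by group
      have : (fun x : π ⧸ K => f (b • x))
          = fun x => (fun y => f (a • y)) ((⟨a⁻¹ * b, hm⟩ : H) • x) := by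
        funext x
        show f (b • x) = f (a • ((a⁻¹ * b) • x))
        rw [← mul_smul, ← hb]
      rw [this, νinv (⟨a⁻¹ * b, hm⟩ : H) _ (bdd_shift a hf)]
    have Fbmk : ∀ (f : π ⧸ K → ℝ), Bdd f → ∀ g : π,
        Fb f (QuotientGroup.mk g) = ν (fun x => f (g • x)) := by
      intro f hf g
      exact const f hf _ g (QuotientGroup.out_eq' _)
    have Fbbdd : ∀ (f : π ⧸ K → ℝ) (C : ℝ), (∀ x, |f x| ≤ C) → ∀ q, |Fb f q| ≤ C := by
      intro f C hC q
      exact mean_abs_le ν νbnd _ C (fun x => hC _)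
    refine ⟨fun f => m (Fb f), ?_, ?_, ?_, ?_⟩
    · intro f g hf hg
      have : Fb (f + g) = Fb f + Fb g := by
        funext q
        show ν (fun x => f (q.out • x) + g (q.out • x)) = _
        exact νadd _ _ (bdd_shift _ hf) (bdd_shift _ hg)
      obtain ⟨C, hC⟩ := hf; obtain ⟨D, hD⟩ := hg
      show m (Fb (f + g)) = m (Fb f) + m (Fb g)
      rw [this]
      exact madd _ _ ⟨C, Fbbdd f C hC⟩ ⟨D, Fbbdd g D hD⟩
    · intro c f hf
      have : Fb (c • f) = c • Fb f := by
        funext q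
        show ν (fun x => c * f (q.out • x)) = c * ν (fun x => f (q.out • x))
        exact νsmul c _ (bdd_shift _ hf)
      obtain ⟨C, hC⟩ := hf
      show m (Fb (c • f)) = c * m (Fb f)
      rw [this]
      exact msmul c _ ⟨C, Fbbdd f C hC⟩
    · intro f hf
      obtain ⟨C, hC⟩ := hf
      have hFbd : Bdd (Fb f) := ⟨C, Fbbdd f C hC⟩
      obtain ⟨h1, h2⟩ := mbnd (Fb f) hFbd
      have point : ∀ q, sInf (Set.range f) ≤ Fb f q ∧ Fb f q ≤ sSup (Set.range f) := by
        intro q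
        have := νbnd (fun x => f (q.out • x)) (bdd_shift _ ⟨C, hC⟩)
        rwa [range_smul_eq] at this
      have hne : (Set.range (Fb f)).Nonempty := Set.range_nonempty _
      constructor
      · refine le_trans (le_csInf hne ?_) h1
        rintro y ⟨q, rfl⟩; exact (point q).1
      · refine h2.trans (csSup_le hne ?_)
        rintro y ⟨q, rfl⟩; exact (point q).2
    · intro a f hf
      have key : Fb (fun x => f (a • x)) = fun q => Fb f ((QuotientGroup.mk a : π ⧸ H) • q) := by
        funext q
        induction q using QuotientGroup.induction_on with
        | H g =>
          have h1 : Fb (fun x => f (a • x)) (QuotientGroup.mk g)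
              = ν (fun x => f (a • (g • x))) := Fbmk _ (bdd_shift a hf) g
          have h2 : (QuotientGroup.mk a : π ⧸ H) • (QuotientGroup.mk g : π ⧸ H)
              = QuotientGroup.mk (a * g) := rfl
          rw [h1, h2, Fbmk f hf (a * g)]
          congr 1
          funext x
          rw [mul_smul]
      obtain ⟨C, hC⟩ := hf
      show m (Fb (fun x => f (a • x))) = m (Fb f)
      rw [key]
      exact minv (QuotientGroup.mk a) (Fb f) ⟨C, Fbbdd f C hC⟩
end
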